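/- Let Γ be a distance-regular graph with valency k, diameter D ≥ 2, and intersection numbers a₁ and c₂. If some vertex x has a co-clique of size s ≥ 2 in its local graph Δ(x), then c₂ - 1 ≥ (s(a₁+1) - k) / C(s,2). -/

import Mathlib

open Finset SimpleGraph

/-- `G` is a distance-regular graph with diameter `D` and intersection numbers
`b i`, `c i`, `a i` (so valency `k = b 0` and `a i = k - b i - c i`). -/
structure IsDRG {V : Type*} [Fintype V] (G : SimpleGraph V) (D : ℕ)
    (b c a : ℕ → ℕ) : Prop where
  connected : G.Connected
  le_diam : ∀ x y : V, G.dist x y ≤ D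
  exists_diam : ∃ x y : V, G.dist x y = D
  card_b : ∀ i, i ≤ D → ∀ x y : V, G.dist x y = i →
      Nat.card {z : V | G.Adj y z ∧ G.dist x z = i + 1} = b i
  card_c : ∀ i, i ≤ D → ∀ x y : V, G.dist x y = i →
      Nat.card {z : V | G.Adj y z ∧ G.dist x z = i - 1} = c i
  card_a : ∀ i, i ≤ D → ∀ x y : V, G.dist x y = i →
      Nat.card {z : V | G.Adj y z ∧ G.dist x z = i} = a i

/-- Bonferroni-type inequality, doubled to avoid division:
`2 ∑ |A y| ≤ 2 |⋃ A y| + ∑_{(y,z), y ≠ z} |A y ∩ A z|`. -/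
lemma bonferroni {V : Type*} [DecidableEq V] (A : V → Finset V) (S : Finset V) :
    2 * ∑ y ∈ S, (A y).card ≤
      2 * (S.biUnion A).card + ∑ p ∈ S.offDiag, (A p.1 ∩ A p.2).card := by
  induction S using Finset.induction with
  | empty => simp
  | @insert y T hy ih =>
    rw [Finset.sum_insert hy, Finset.offDiag_insert hy, Finset.biUnion_insert]
    have hdisj1 : Disjoint (T.offDiag ∪ {y} ×ˢ T) (T ×ˢ {y}) := by
      rw [Finset.disjoint_left]
      rintro ⟨p1, p2⟩ hp hq
      simp only [Finset.mem_product, Finset.mem_singleton] at hq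
      rcases Finset.mem_union.1 hp with h | h
      · exact hy (by rw [← hq.2]; exact (Finset.mem_offDiag.1 h).2.1)
      · simp only [Finset.mem_product, Finset.mem_singleton] at h
        exact hy (by rw [← h.1]; exact hq.1)
    have hdisj2 : Disjoint T.offDiag ({y} ×ˢ T) := by
      rw [Finset.disjoint_left]
      rintro ⟨p1, p2⟩ hp hq
      simp only [Finset.mem_product, Finset.mem_singleton] at hq
      exact hy (hq.1 ▸ (Finset.mem_offDiag.1 hp).1)
    rw [Finset.sum_union hdisj1, Finset.sum_union hdisj2]
    have h1 : ∑ p ∈ {y} ×ˢ T, (A p.1 ∩ A p.2).card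
        = ∑ z ∈ T, (A y ∩ A z).card := by
      rw [Finset.singleton_product, Finset.sum_map]; rfl
    have h2 : ∑ p ∈ T ×ˢ {y}, (A p.1 ∩ A p.2).card
        = ∑ z ∈ T, (A y ∩ A z).card := by
      rw [Finset.product_singleton, Finset.sum_map]
      exact Finset.sum_congr rfl fun z _ => by rw [Finset.inter_comm]; rfl
    have hinter : (A y ∩ T.biUnion A).card ≤ ∑ z ∈ T, (A y ∩ A z).card := by
      have : A y ∩ T.biUnion A = T.biUnion (fun z => A y ∩ A z) := by
        ext w
        simp only [Finset.mem_inter, Finset.mem_biUnion]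
        tauto
      rw [this]
      exact Finset.card_biUnion_le
    have hcup := Finset.card_union_add_card_inter (A y) (T.biUnion A)
    omega

/-- If a local graph of a distance-regular graph contains a co-clique of size `s ≥ 2`,
then `c₂ - 1 ≥ (s(a₁+1) - k) / C(s,2)`. -/
theorem stmt0 {V : Type*} [Fintype V] (G : SimpleGraph V) (D : ℕ) (b c a : ℕ → ℕ)
    (hD : 2 ≤ D) (hG : IsDRG G D b c a)
    (x : V) (S : Finset V) (hSnbr : ∀ y ∈ S, G.Adj x y)
    (hScoclique : ∀ y ∈ S, ∀ z ∈ S, y ≠ z → ¬ G.Adj y z)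
    (s : ℕ) (hcard : S.card = s) (hs : 2 ≤ s) :
    ((c 2 : ℝ) - 1) ≥ ((s : ℝ) * (a 1 + 1) - b 0) / (s.choose 2 : ℝ) := by
  classical
  -- A y = {y} ∪ common neighbors of x and y; all contained in Γ(x)
  set A : V → Finset V :=
    fun y => insert y (Finset.univ.filter fun w => G.Adj x w ∧ G.Adj y w) with hA
  -- distance-2 fact for distinct members of S
  have hdist2 : ∀ y ∈ S, ∀ z ∈ S, y ≠ z → G.dist y z = 2 := by
    intro y hy z hz hyz
    have hle : G.dist y z ≤ 2 := by
      simpa using dist_le (((hSnbr y hy).symm.toWalk.append (hSnbr z hz).toWalk))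
    have hne : G.dist y z ≠ 0 := fun h => hyz (hG.connected.dist_eq_zero_iff.1 h)
    have hne1 : G.dist y z ≠ 1 := fun h =>
      hScoclique y hy z hz hyz (dist_eq_one_iff_adj.1 h)
    omega
  -- |Γ(x)| = b 0
  have hNx : (Finset.univ.filter fun w => G.Adj x w).card = b 0 := by
    have h0 := hG.card_b 0 (by omega) x x SimpleGraph.dist_self
    rw [Nat.card_eq_card_toFinset, Set.toFinset_setOf] at h0
    rw [← h0]
    congr 1
    apply Finset.filter_congr
    intro z _
    simp only [zero_add]
    constructor
    · intro h; exact ⟨h, dist_eq_one_iff_adj.2 h⟩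
    · intro h; exact h.1
  -- |A y| = a 1 + 1 for y ∈ S
  have hAcard : ∀ y ∈ S, (A y).card = a 1 + 1 := by
    intro y hy
    have hxy : G.Adj x y := hSnbr y hy
    have h1 := hG.card_a 1 (by omega) x y (dist_eq_one_iff_adj.2 hxy)
    rw [Nat.card_eq_card_toFinset, Set.toFinset_setOf] at h1
    have hfilter : (Finset.univ.filter fun w => G.Adj x w ∧ G.Adj y w).card = a 1 := by
      rw [← h1]
      congr 1
      apply Finset.filter_congr
      intro z _
      constructor
      · intro h; exact ⟨h.2, dist_eq_one_iff_adj.2 h.1⟩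
      · intro h; exact ⟨dist_eq_one_iff_adj.1 h.2, h.1⟩
    rw [hA, Finset.card_insert_of_notMem (by simp [G.irrefl]), hfilter]
  -- A y ⊆ Γ(x)
  have hAsub : ∀ y ∈ S, A y ⊆ Finset.univ.filter fun w => G.Adj x w := by
    intro y hy w hw
    simp only [hA, Finset.mem_insert, Finset.mem_filter, Finset.mem_univ, true_and] at hw
    simp only [Finset.mem_filter, Finset.mem_univ, true_and]
    rcases hw with rfl | hw
    · exact hSnbr _ hy
    · exact hw.1
  -- c 2 ≥ 1
  have hc2pos : 1 ≤ c 2 := by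
    obtain ⟨y, hy⟩ : S.Nonempty := Finset.card_pos.1 (by omega)
    have h1lt : 1 < S.card := by omega
    obtain ⟨z, hz, hzy⟩ := Finset.exists_mem_ne h1lt y
    have hyz : y ≠ z := Ne.symm hzy
    have hc := hG.card_c 2 hD y z (hdist2 y hy z hz hyz)
    rw [Nat.card_eq_card_toFinset, Set.toFinset_setOf] at hc
    have hxmem : x ∈ Finset.univ.filter
        fun w => G.Adj z w ∧ G.dist y w = 2 - 1 := by
      simp only [Finset.mem_filter, Finset.mem_univ, true_and]
      exact ⟨(hSnbr z hz).symm, dist_eq_one_iff_adj.2 (hSnbr y hy).symm⟩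
    have hpos := Finset.card_pos.2 ⟨x, hxmem⟩
    omega
  -- pairwise intersections are small
  have hpair : ∀ y ∈ S, ∀ z ∈ S, y ≠ z → (A y ∩ A z).card ≤ c 2 - 1 := by
    intro y hy z hz hyz
    have hc := hG.card_c 2 hD y z (hdist2 y hy z hz hyz)
    rw [Nat.card_eq_card_toFinset, Set.toFinset_setOf] at hc
    set CN := Finset.univ.filter fun w => G.Adj z w ∧ G.dist y w = 2 - 1 with hCN
    have hsub : A y ∩ A z ⊆ CN.erase x := by
      intro w hw
      obtain ⟨hw1, hw2⟩ := Finset.mem_inter.1 hw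
      simp only [hA, Finset.mem_insert, Finset.mem_filter, Finset.mem_univ,
        true_and] at hw1 hw2
      have hwy : G.Adj x w ∧ G.Adj y w := by
        rcases hw1 with h | h
        · exfalso
          rcases hw2 with h2 | h2
          · exact hyz (h.symm.trans h2)
          · exact hScoclique z hz y hy (Ne.symm hyz) (h ▸ h2.2)
        · exact h
      have hwz : G.Adj z w := by
        rcases hw2 with h2 | h2
        · exact absurd (h2 ▸ hwy.2) (hScoclique y hy z hz hyz)
        · exact h2.2
      refine Finset.mem_erase.2 ⟨fun h => G.irrefl (h ▸ hwy.1), ?_⟩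
      simp only [hCN, Finset.mem_filter, Finset.mem_univ, true_and]
      exact ⟨hwz, dist_eq_one_iff_adj.2 hwy.2⟩
    have hxCN : x ∈ CN := by
      simp only [hCN, Finset.mem_filter, Finset.mem_univ, true_and]
      exact ⟨(hSnbr z hz).symm, dist_eq_one_iff_adj.2 (hSnbr y hy).symm⟩
    calc (A y ∩ A z).card ≤ (CN.erase x).card := Finset.card_le_card hsub
      _ = CN.card - 1 := Finset.card_erase_of_mem hxCN
      _ ≤ c 2 - 1 := by rw [hc]
  -- apply Bonferroni
  have hbon := bonferroni A S
  have hsum : ∑ y ∈ S, (A y).card = s * (a 1 + 1) := by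
    rw [Finset.sum_congr rfl hAcard, Finset.sum_const, hcard, smul_eq_mul]
  have hbU : (S.biUnion A).card ≤ b 0 := by
    rw [← hNx]
    exact Finset.card_le_card (Finset.biUnion_subset.2 hAsub)
  have hsq : s * s - s = s * (s - 1) := by
    obtain ⟨t, rfl⟩ : ∃ t, s = t + 1 := ⟨s - 1, by omega⟩
    simp [Nat.mul_succ, Nat.succ_sub_one, Nat.mul_comm]
  have hoffsum : ∑ p ∈ S.offDiag, (A p.1 ∩ A p.2).card ≤ s * (s - 1) * (c 2 - 1) := by
    calc ∑ p ∈ S.offDiag, (A p.1 ∩ A p.2).card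
        ≤ ∑ _p ∈ S.offDiag, (c 2 - 1) := by
          apply Finset.sum_le_sum
          rintro ⟨p1, p2⟩ hp
          obtain ⟨h1, h2, h3⟩ := Finset.mem_offDiag.1 hp
          exact hpair p1 h1 p2 h2 h3
      _ = s * (s - 1) * (c 2 - 1) := by
          rw [Finset.sum_const, Finset.offDiag_card, hcard, smul_eq_mul, hsq]
  have hev : 2 ∣ s * (s - 1) := by
    rcases Nat.even_or_odd s with h | h
    · exact Dvd.dvd.mul_right h.two_dvd _
    · exact Dvd.dvd.mul_left (Nat.Odd.sub_odd h odd_one).two_dvd _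
  have hchoose : 2 * s.choose 2 = s * (s - 1) := by
    rw [Nat.choose_two_right, Nat.mul_div_cancel' hev]
  have hassoc : s * (s - 1) * (c 2 - 1) = 2 * (s.choose 2 * (c 2 - 1)) := by
    rw [← hchoose, mul_assoc]
  -- key natural number inequality
  have hkey : s * (a 1 + 1) ≤ b 0 + s.choose 2 * (c 2 - 1) := by
    rw [hsum] at hbon
    omega
  -- transfer to reals
  have hchoosepos : (0 : ℝ) < (s.choose 2 : ℝ) := by
    exact_mod_cast Nat.choose_pos (by omega : 2 ≤ s)
  rw [ge_iff_le, div_le_iff₀ hchoosepos]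
  have hc2' : ((c 2 - 1 : ℕ) : ℝ) = (c 2 : ℝ) - 1 := by
    push_cast [Nat.cast_sub hc2pos]; ring
  calc (s : ℝ) * (a 1 + 1) - b 0 ≤ (s.choose 2 : ℝ) * ((c 2 - 1 : ℕ) : ℝ) := by
        have h := hkey
        have : ((s * (a 1 + 1) : ℕ) : ℝ) ≤ ((b 0 + s.choose 2 * (c 2 - 1) : ℕ) : ℝ) := by
          exact_mod_cast h
        push_cast at this
        linarith [this]
    _ = ((c 2 : ℝ) - 1) * (s.choose 2 : ℝ) := by rw [hc2']; ring
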